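/- For all x, y ∈ ℂ, the following polynomial identity holds: (y + 1)²(y² + y + 1)³(y⁴ + y³ + y² + y + 1)⁵ · (x³⁰ + y⁵)(x³⁰y⁵ + 1)(x³⁰ − y⁶)(x³⁰y⁶ − 1)(x³⁰ − y¹⁰)²(x³⁰y¹⁰ − 1)²(x⁶⁰ − y¹⁵)(x³⁰ + y¹⁵)²(x³⁰y¹⁵ + 1)²(x⁶⁰y¹⁵ − 1)(x³⁰ − y³⁰)(x³⁰y³⁰ − 1) · (y − 1)⁸ = −(y + 1)²(y³ − 1)³(y⁵ − 1)⁵ · (y³⁰ − x³⁰)(y³⁰x³⁰ − 1)(y¹⁵ + x³⁰)²(y¹⁵x³⁰ + 1)²(y¹⁰ − x³⁰)²(y¹⁰x³⁰ − 1)²(y¹⁵ − x⁶⁰)(y¹⁵x⁶⁰ − 1)(y⁶ − x³⁰)(y⁶x³⁰ − 1)(y⁵ + x³⁰)(y⁵x³⁰ + 1). -/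
import Mathlib

private lemma key (p1 p2 p3 q f1 f2 f3 f4 f5 f6 f7 f8 f9 f10 f11 f12 : ℂ) :
    p1 ^ 2 * p2 ^ 3 * p3 ^ 5
      * f1 * f2 * f3 * f4 * f5 ^ 2 * f6 ^ 2 * f7 * f8 ^ 2 * f9 ^ 2 * f10 * f11 * f12
      * (-q) ^ 8
    = -(p1 ^ 2 * (-q * p2) ^ 3 * (-q * p3) ^ 5
      * -f11 * f12 * f8 ^ 2 * f9 ^ 2 * (-f5) ^ 2 * f6 ^ 2 * -f7 * f10
      * -f3 * f4 * f1 * f2) := by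
  ring

/-- Exact agreement between the E₈ Toda spectral curve at the conifold point (times the
adjoint factor `(y-1)⁸`) and (minus) the `λ → 0` limit of the LMO curve of the Poincaré
sphere. -/
theorem stmt_16 :
    ∀ x y : ℂ,
      (y + 1) ^ 2 * (y ^ 2 + y + 1) ^ 3 * (y ^ 4 + y ^ 3 + y ^ 2 + y + 1) ^ 5
        * (x ^ 30 + y ^ 5) * (x ^ 30 * y ^ 5 + 1)
        * (x ^ 30 - y ^ 6) * (x ^ 30 * y ^ 6 - 1)
        * (x ^ 30 - y ^ 10) ^ 2 * (x ^ 30 * y ^ 10 - 1) ^ 2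
        * (x ^ 60 - y ^ 15)
        * (x ^ 30 + y ^ 15) ^ 2 * (x ^ 30 * y ^ 15 + 1) ^ 2
        * (x ^ 60 * y ^ 15 - 1)
        * (x ^ 30 - y ^ 30) * (x ^ 30 * y ^ 30 - 1)
        * (y - 1) ^ 8
      = -((y + 1) ^ 2 * (y ^ 3 - 1) ^ 3 * (y ^ 5 - 1) ^ 5
        * (y ^ 30 - x ^ 30) * (y ^ 30 * x ^ 30 - 1)
        * (y ^ 15 + x ^ 30) ^ 2 * (y ^ 15 * x ^ 30 + 1) ^ 2
        * (y ^ 10 - x ^ 30) ^ 2 * (y ^ 10 * x ^ 30 - 1) ^ 2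
        * (y ^ 15 - x ^ 60) * (y ^ 15 * x ^ 60 - 1)
        * (y ^ 6 - x ^ 30) * (y ^ 6 * x ^ 30 - 1)
        * (y ^ 5 + x ^ 30) * (y ^ 5 * x ^ 30 + 1)) := by
  intro x y
  have h1 : y ^ 3 - 1 = -(1 - y) * (y ^ 2 + y + 1) := by ring
  have h2 : y ^ 5 - 1 = -(1 - y) * (y ^ 4 + y ^ 3 + y ^ 2 + y + 1) := by ring
  have h3 : y ^ 30 - x ^ 30 = -(x ^ 30 - y ^ 30) := by ring
  have h4 : y ^ 30 * x ^ 30 - 1 = x ^ 30 * y ^ 30 - 1 := by ring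
  have h5 : y ^ 15 + x ^ 30 = x ^ 30 + y ^ 15 := by ring
  have h6 : y ^ 15 * x ^ 30 + 1 = x ^ 30 * y ^ 15 + 1 := by ring
  have h7 : y ^ 10 - x ^ 30 = -(x ^ 30 - y ^ 10) := by ring
  have h8 : y ^ 10 * x ^ 30 - 1 = x ^ 30 * y ^ 10 - 1 := by ring
  have h9 : y ^ 15 - x ^ 60 = -(x ^ 60 - y ^ 15) := by ring
  have h10 : y ^ 15 * x ^ 60 - 1 = x ^ 60 * y ^ 15 - 1 := by ring
  have h11 : y ^ 6 - x ^ 30 = -(x ^ 30 - y ^ 6) := by ring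
  have h12 : y ^ 6 * x ^ 30 - 1 = x ^ 30 * y ^ 6 - 1 := by ring
  have h13 : y ^ 5 + x ^ 30 = x ^ 30 + y ^ 5 := by ring
  have h14 : y ^ 5 * x ^ 30 + 1 = x ^ 30 * y ^ 5 + 1 := by ring
  have h15 : y - 1 = -(1 - y) := by ring
  rw [h1, h2, h3, h4, h5, h6, h7, h8, h9, h10, h11, h12, h13, h14, h15]
  exact key (y + 1) (y ^ 2 + y + 1) (y ^ 4 + y ^ 3 + y ^ 2 + y + 1) (1 - y)
    (x ^ 30 + y ^ 5) (x ^ 30 * y ^ 5 + 1) (x ^ 30 - y ^ 6) (x ^ 30 * y ^ 6 - 1)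
    (x ^ 30 - y ^ 10) (x ^ 30 * y ^ 10 - 1) (x ^ 60 - y ^ 15)
    (x ^ 30 + y ^ 15) (x ^ 30 * y ^ 15 + 1) (x ^ 60 * y ^ 15 - 1)
    (x ^ 30 - y ^ 30) (x ^ 30 * y ^ 30 - 1)
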